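/- Let φ : ℝⁿ → ℝⁿ be a C³ vector field with Δφ = f componentwise (Δ the Laplacian acting on each component). Define G(x) := Σ_k ∂_{x_k} φ_k(x) = div φ(x), g := grad G, and r with components r_i := Σ_k ∂_{x_k}(∂_{x_k} φ_i − ∂_{x_i} φ_k). Then f = g + r, g is a gradient field, and div r = 0; i.e., (g, r) is a Helmholtz decomposition of f. -/

import Mathlib

/-- Partial derivative in the `i`-th coordinate direction of a scalar field on ℝⁿ. -/
noncomputable def pd {n : ℕ} (i : Fin n) (g : EuclideanSpace ℝ (Fin n) → ℝ) :
    EuclideanSpace ℝ (Fin n) → ℝ :=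
  fun x => fderiv ℝ g x (EuclideanSpace.single i 1)

section aux
variable {n : ℕ}

lemma pd_contDiff {m : ℕ} {u : EuclideanSpace ℝ (Fin n) → ℝ}
    (hu : ContDiff ℝ (m + 1 : ℕ) u) (i : Fin n) : ContDiff ℝ (m : ℕ) (pd i u) := by
  have : ContDiff ℝ (m : ℕ) (fderiv ℝ u) := hu.fderiv_right (by exact_mod_cast le_refl _)
  exact this.clm_apply contDiff_const

lemma pd_sub {u v : EuclideanSpace ℝ (Fin n) → ℝ} {x} (hu : DifferentiableAt ℝ u x)
    (hv : DifferentiableAt ℝ v x) (i : Fin n) :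
    pd i (fun y => u y - v y) x = pd i u x - pd i v x := by
  simp only [pd, fderiv_fun_sub hu hv, ContinuousLinearMap.sub_apply]

lemma pd_neg {u : EuclideanSpace ℝ (Fin n) → ℝ} (i : Fin n) (x) :
    pd i (fun y => -(u y)) x = -(pd i u x) := by
  simp only [pd, fderiv_fun_neg, ContinuousLinearMap.neg_apply]

lemma pd_sum {ι : Type*} (s : Finset ι) {u : ι → EuclideanSpace ℝ (Fin n) → ℝ} {x}
    (hu : ∀ k ∈ s, DifferentiableAt ℝ (u k) x) (i : Fin n) :
    pd i (fun y => ∑ k ∈ s, u k y) x = ∑ k ∈ s, pd i (u k) x := by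
  simp only [pd, fderiv_fun_sum hu, ContinuousLinearMap.sum_apply]

lemma pd_comm {u : EuclideanSpace ℝ (Fin n) → ℝ} (hu : ContDiff ℝ 2 u) (i j : Fin n) (x) :
    pd i (pd j u) x = pd j (pd i u) x := by
  have hd : DifferentiableAt ℝ (fderiv ℝ u) x :=
    (hu.fderiv_right (m := 1) (by norm_num)).differentiable (by norm_num) x
  have key : ∀ a b : Fin n,
      pd a (pd b u) x = fderiv ℝ (fderiv ℝ u) x (EuclideanSpace.single a 1)
        (EuclideanSpace.single b 1) := by
    intro a b
    have : pd b u = fun y => (fderiv ℝ u y) (EuclideanSpace.single b 1) := rfl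
    rw [pd, this, fderiv_clm_apply hd (differentiableAt_const _)]
    simp
  rw [key, key, (hu.contDiffAt.isSymmSndFDerivAt (by simp)).eq]

end aux

/-- Helmholtz decomposition from a solution of the componentwise Poisson equation:
if `Δ φ = f` componentwise, then with `G = div φ`, `g = grad G` and
`r_i = ∑_k ∂_k (∂_k φ_i − ∂_i φ_k)`, one has `f = g + r`, `g` is a gradient field,
and `div r = 0`. -/
theorem helmholtz_decomposition_from_poisson (n : ℕ)
    (f φ : EuclideanSpace ℝ (Fin n) → Fin n → ℝ)
    (hφ : ContDiff ℝ 3 φ) (hf : ContDiff ℝ 1 f)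
    (hpoisson : ∀ x i, ∑ k, pd k (pd k (fun z => φ z i)) x = f x i) :
    let G : EuclideanSpace ℝ (Fin n) → ℝ := fun x => ∑ k, pd k (fun y => φ y k) x
    let g : EuclideanSpace ℝ (Fin n) → Fin n → ℝ := fun x i => pd i G x
    let r : EuclideanSpace ℝ (Fin n) → Fin n → ℝ := fun x i =>
      ∑ k, pd k (fun y => pd k (fun z => φ z i) y - pd i (fun z => φ z k) y) x
    (∀ x i, f x i = g x i + r x i) ∧
      (∃ G' : EuclideanSpace ℝ (Fin n) → ℝ, ∀ x i, g x i = pd i G' x) ∧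
      (∀ x, ∑ i, pd i (fun y => r y i) x = 0) := by
  intro G g r
  -- basic regularity facts
  have hφ3 : ∀ i : Fin n, ContDiff ℝ (2 + 1 : ℕ) (fun z => φ z i) := by
    intro i
    exact ((contDiff_pi.mp hφ) i).of_le (by norm_num)
  have hpd2 : ∀ (i j : Fin n), ContDiff ℝ (1 + 1 : ℕ) (pd j (fun z => φ z i)) :=
    fun i j => pd_contDiff (hφ3 i) j
  have hA2 : ∀ (i k : Fin n), ContDiff ℝ (1 + 1 : ℕ)
      (fun y => pd k (fun z => φ z i) y - pd i (fun z => φ z k) y) :=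
    fun i k => (hpd2 i k).sub (hpd2 k i)
  have hpdA1 : ∀ (i k j : Fin n), ContDiff ℝ (0 + 1 : ℕ)
      (pd j (fun y => pd k (fun z => φ z i) y - pd i (fun z => φ z k) y)) :=
    fun i k j => pd_contDiff (hA2 i k) j
  -- key computation for r
  have hr : ∀ x i, r x i = f x i - pd i G x := by
    intro x i
    have h1 : r x i = ∑ k, (pd k (pd k (fun z => φ z i)) x - pd k (pd i (fun z => φ z k)) x) := by
      refine Finset.sum_congr rfl fun k _ => ?_
      exact pd_sub ((hpd2 i k).differentiable (by norm_num) x)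
        ((hpd2 k i).differentiable (by norm_num) x) k
    rw [h1, Finset.sum_sub_distrib, hpoisson]
    congr 1
    have h2 : ∀ k : Fin n, pd k (pd i (fun z => φ z k)) x = pd i (pd k (fun z => φ z k)) x :=
      fun k => pd_comm ((hφ3 k).of_le (by norm_num)) k i x
    simp only [h2]
    rw [show G = fun y => ∑ k, pd k (fun z => φ z k) y from rfl]
    rw [pd_sum Finset.univ (fun k _ => ((hpd2 k k).differentiable (by norm_num) x)) i]
  refine ⟨fun x i => by rw [hr x i]; show f x i = pd i G x + _; ring, ⟨G, fun x i => rfl⟩, ?_⟩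
  -- divergence of r is zero
  intro x
  have h3 : ∀ i : Fin n, pd i (fun y => r y i) x =
      ∑ k, pd i (pd k (fun y => pd k (fun z => φ z i) y - pd i (fun z => φ z k) y)) x := by
    intro i
    rw [show (fun y => r y i) = fun y =>
      ∑ k, pd k (fun z => pd k (fun w => φ w i) z - pd i (fun w => φ w k) z) y from rfl]
    exact pd_sum Finset.univ (fun k _ => ((hpdA1 i k k).differentiable (by norm_num) x)) i
  set T : Fin n → Fin n → ℝ := fun i k =>
    pd i (pd k (fun y => pd k (fun z => φ z i) y - pd i (fun z => φ z k) y)) x with hT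
  have hS : (∑ i, pd i (fun y => r y i) x) = ∑ i, ∑ k, T i k := by
    exact Finset.sum_congr rfl fun i _ => h3 i
  have hanti : ∀ i k, T k i = -T i k := by
    intro i k
    have hfun : (fun y => pd i (fun z => φ z k) y - pd k (fun z => φ z i) y)
        = fun y => -((fun w => pd k (fun z => φ z i) w - pd i (fun z => φ z k) w) y) := by
      funext y; ring
    calc T k i = pd k (pd i (fun y => pd i (fun z => φ z k) y - pd k (fun z => φ z i) y)) x := rfl
    _ = pd k (pd i (fun y => -((fun w => pd k (fun z => φ z i) w - pd i (fun z => φ z k) w) y))) x := by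
        rw [hfun]
    _ = pd k (fun w => -(pd i (fun y => pd k (fun z => φ z i) y - pd i (fun z => φ z k) y) w)) x := by
        congr 1; funext w; exact pd_neg i w
    _ = -(pd k (pd i (fun y => pd k (fun z => φ z i) y - pd i (fun z => φ z k) y)) x) :=
        pd_neg k x
    _ = -(pd i (pd k (fun y => pd k (fun z => φ z i) y - pd i (fun z => φ z k) y)) x) := by
        rw [pd_comm ((hA2 i k).of_le (by norm_num)) k i x]
    _ = -T i k := rfl
  have : (∑ i, ∑ k, T i k) = -∑ i, ∑ k, T i k := by
    calc (∑ i, ∑ k, T i k) = ∑ i, ∑ k, T k i := Finset.sum_comm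
    _ = ∑ i, ∑ k, -(T i k) :=
        Finset.sum_congr rfl fun i _ => Finset.sum_congr rfl fun k _ => hanti i k
    _ = -∑ i, ∑ k, T i k := by simp
  rw [hS]
  linarith [this]
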